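/- Fix a real number λ ≠ 0. For all integers n, k with n ≥ k ≥ 0, the degenerate Stirling number of the second kind satisfies S_{2,λ}(n,k) = Σ_{m=k}^{n} S^{(2)}_{J,λ}(m,k) S_{1,λ}(n,m). -/

import Mathlib

open Finset

/-- The degenerate falling factorial `(x)_{n,λ} = x(x−λ)⋯(x−(n−1)λ)`;
for `lam = 1` it is the ordinary falling factorial `(x)_n`. -/
noncomputable def dff (lam : ℝ) (n : ℕ) (x : ℝ) : ℝ :=
  ∏ i ∈ Finset.range n, (x - i * lam)

/-- The degenerate exponential `e_λ^x(t) = Σ_{n≥0} (x)_{n,λ} t^n/n!`. -/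
noncomputable def degExp (lam x : ℝ) : PowerSeries ℝ :=
  PowerSeries.mk fun n => dff lam n x / n.factorial

/-- The degenerate logarithm `log_λ(1+t) = Σ_{n≥1} λ^{n−1}(1)_{n,1/λ} t^n/n!`. -/
noncomputable def degLog (lam : ℝ) : PowerSeries ℝ :=
  PowerSeries.mk fun n =>
    if n = 0 then 0 else lam ^ (n - 1) * dff (1 / lam) n 1 / n.factorial

/-- Composition `f(g(t))` of formal power series (valid definition of composition
when `g` has zero constant term, as in all uses below). -/
noncomputable def pscomp (f g : PowerSeries ℝ) : PowerSeries ℝ :=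
  PowerSeries.mk fun n =>
    ∑ k ∈ Finset.range (n + 1), (PowerSeries.coeff k f) * (PowerSeries.coeff n (g ^ k))

/- ### Auxiliary lemmas -/

lemma dff_zero' (lam x : ℝ) : dff lam 0 x = 1 := Finset.prod_range_zero _

lemma dff_succ' (lam x : ℝ) (n : ℕ) : dff lam (n+1) x = dff lam n x * (x - n*lam) :=
  Finset.prod_range_succ _ _

lemma dff_nat_zero' (lam : ℝ) (n : ℕ) : dff lam n 0 = if n = 0 then 1 else 0 := by
  cases n with
  | zero => simp [dff_zero']
  | succ n =>
    simp only [Nat.succ_ne_zero, if_false]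
    apply Finset.prod_eq_zero (Finset.mem_range.2 (Nat.succ_pos n))
    simp

lemma dff_one_nat' (j k : ℕ) : dff 1 k (j:ℝ) = (k.factorial : ℝ) * (j.choose k) := by
  induction k with
  | zero => simp [dff_zero']
  | succ k ih =>
    rw [dff_succ', ih]
    rcases le_or_gt j k with h | h
    · rcases eq_or_lt_of_le h with rfl | h'
      · simp [Nat.choose_succ_self]
      · rw [Nat.choose_eq_zero_of_lt h', Nat.choose_eq_zero_of_lt (by omega)]; ring
    · have hc := congrArg (Nat.cast : ℕ → ℝ) (Nat.choose_succ_right_eq j k)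
      push_cast [Nat.cast_sub h.le] at hc
      rw [Nat.factorial_succ]
      push_cast
      nlinarith [hc]

lemma dff_add' (lam : ℝ) : ∀ (n : ℕ) (x y : ℝ), dff lam n (x+y) =
    ∑ i ∈ range (n+1), (n.choose i : ℝ) * dff lam i x * dff lam (n-i) y := by
  intro n
  induction n with
  | zero => intro x y; simp [dff_zero']
  | succ n ih =>
    intro x y
    rw [dff_succ', ih]
    rw [Finset.sum_mul]
    have split : ∀ i ∈ range (n+1),
        (n.choose i : ℝ) * dff lam i x * dff lam (n-i) y * (x + y - n*lam)
        = (n.choose i : ℝ) * (dff lam (i+1) x * dff lam (n-i) y)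
          + (n.choose i : ℝ) * (dff lam i x * dff lam (n-i+1) y) := by
      intro i hi
      rw [Finset.mem_range] at hi
      have hi' : i ≤ n := Nat.lt_succ_iff.1 hi
      have hcast : ((n-i : ℕ) : ℝ) = (n:ℝ) - i := by
        rw [Nat.cast_sub hi']
      rw [dff_succ', dff_succ', hcast]
      ring
    rw [Finset.sum_congr rfl split, Finset.sum_add_distrib]
    have hB : ∑ i ∈ range (n+1), (n.choose i : ℝ) * (dff lam i x * dff lam (n-i+1) y)
        = (∑ i ∈ range n, (n.choose (i+1) : ℝ) * (dff lam (i+1) x * dff lam (n-i) y))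
          + dff lam (n+1) y := by
      rw [Finset.sum_range_succ']
      congr 1
      · apply Finset.sum_congr rfl
        intro i hi
        rw [Finset.mem_range] at hi
        have : n - (i+1) + 1 = n - i := by omega
        rw [this]
      · simp [dff_zero']
    rw [hB]
    have hB' : ∑ i ∈ range n, (n.choose (i+1) : ℝ) * (dff lam (i+1) x * dff lam (n-i) y)
        = ∑ i ∈ range (n+1), (n.choose (i+1) : ℝ) * (dff lam (i+1) x * dff lam (n-i) y) := by
      rw [Finset.sum_range_succ, Nat.choose_succ_self]
      simp
    rw [hB']
    rw [Finset.sum_range_succ' (fun i => ((n+1).choose i : ℝ) * dff lam i x * dff lam (n+1-i) y)]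
    have : ∀ i ∈ range (n+1),
        ((n+1).choose (i+1) : ℝ) * dff lam (i+1) x * dff lam (n+1-(i+1)) y
        = (n.choose i : ℝ) * (dff lam (i+1) x * dff lam (n-i) y)
          + (n.choose (i+1) : ℝ) * (dff lam (i+1) x * dff lam (n-i) y) := by
      intro i hi
      have h1 : n + 1 - (i+1) = n - i := by omega
      rw [h1, Nat.choose_succ_succ]
      push_cast
      ring
    rw [Finset.sum_congr rfl this, Finset.sum_add_distrib]
    simp [dff_zero']
    ring

lemma lindep' (N : ℕ) (c : ℕ → ℝ)
    (h : ∀ x : ℝ, ∑ l ∈ range N, c l * dff 1 l x = 0) :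
    ∀ l, l < N → c l = 0 := by
  intro l
  induction l using Nat.strong_induction_on with
  | _ l ih =>
    intro hlN
    have hl := h (l : ℝ)
    have hsum : ∑ i ∈ range N, c i * dff 1 i (l:ℝ) = c l * (l.factorial : ℝ) := by
      rw [Finset.sum_eq_single l]
      · rw [dff_one_nat', Nat.choose_self]; push_cast; ring
      · intro i hi hne
        rcases lt_or_gt_of_ne hne with hlt | hgt
        · rw [ih i hlt (Finset.mem_range.1 hi)]; ring
        · rw [dff_one_nat', Nat.choose_eq_zero_of_lt hgt]; push_cast; ring
      · intro h'; exact absurd (Finset.mem_range.2 hlN) h'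
    rw [hl] at hsum
    have := Nat.factorial_pos l
    have hf : (l.factorial : ℝ) ≠ 0 := by positivity
    rcases mul_eq_zero.1 hsum.symm with h' | h'
    · exact h'
    · exact absurd h' hf

lemma binom_inv' (a b : ℕ → ℝ)
    (h : ∀ j : ℕ, ∑ k ∈ range (j+1), (j.choose k : ℝ) * a k
        = ∑ k ∈ range (j+1), (j.choose k : ℝ) * b k) :
    ∀ k, a k = b k := by
  intro k
  induction k using Nat.strong_induction_on with
  | _ k ih =>
    have hk := h k
    rw [Finset.sum_range_succ, Finset.sum_range_succ] at hk
    have heq : ∑ i ∈ range k, (k.choose i : ℝ) * a i = ∑ i ∈ range k, (k.choose i : ℝ) * b i :=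
      Finset.sum_congr rfl fun i hi => by rw [ih i (Finset.mem_range.1 hi)]
    rw [heq, Nat.choose_self] at hk
    push_cast at hk
    linarith

lemma coeff_pow_zero' (g : PowerSeries ℝ) (hg : PowerSeries.constantCoeff g = 0) :
    ∀ (m n : ℕ), n < m → PowerSeries.coeff n (g ^ m) = 0 := by
  intro m
  induction m with
  | zero => intro n h; omega
  | succ m ih =>
    intro n h
    rw [pow_succ, PowerSeries.coeff_mul]
    apply Finset.sum_eq_zero
    intro p hp
    rw [Finset.HasAntidiagonal.mem_antidiagonal] at hp
    rcases Nat.eq_zero_or_pos p.2 with h2 | h2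
    · have : PowerSeries.coeff p.2 g = 0 := by
        rw [h2, PowerSeries.coeff_zero_eq_constantCoeff, hg]
      rw [this, mul_zero]
    · rw [ih p.1 (by omega), zero_mul]

lemma degExp_nat_pow' (lam : ℝ) (j : ℕ) : degExp lam 1 ^ j = degExp lam (j:ℝ) := by
  induction j with
  | zero =>
    ext n
    simp [degExp, PowerSeries.coeff_mk, PowerSeries.coeff_one, dff_nat_zero']
    split <;> simp_all
  | succ j ih =>
    rw [pow_succ, ih]
    ext n
    rw [PowerSeries.coeff_mul, Finset.Nat.sum_antidiagonal_eq_sum_range_succ_mk]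
    simp only [degExp, PowerSeries.coeff_mk]
    push_cast
    rw [show ((j:ℝ)+1) = (j:ℝ) + 1 from rfl, dff_add' lam n (j:ℝ) 1, Finset.sum_div]
    apply Finset.sum_congr rfl
    intro i hi
    rw [Finset.mem_range] at hi
    have hi' : i ≤ n := by omega
    have hfac := congrArg (Nat.cast : ℕ → ℝ) (Nat.choose_mul_factorial_mul_factorial hi')
    push_cast at hfac
    have h1 : (i.factorial : ℝ) ≠ 0 := by positivity
    have h2 : ((n-i).factorial : ℝ) ≠ 0 := by positivity
    have h3 : (n.factorial : ℝ) ≠ 0 := by positivity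
    field_simp
    linear_combination (-(dff lam i (j:ℝ) * dff lam (n - i) 1)) * hfac

lemma pscomp_coeff' (f g : PowerSeries ℝ) (n : ℕ) :
    PowerSeries.coeff n (pscomp f g)
      = ∑ k ∈ Finset.range (n + 1), (PowerSeries.coeff k f) * (PowerSeries.coeff n (g ^ k)) :=
  PowerSeries.coeff_mk _ _

lemma pscomp_one' (g : PowerSeries ℝ) : pscomp 1 g = 1 := by
  ext n
  rw [pscomp_coeff']
  rw [Finset.sum_eq_single 0]
  · simp
  · intro k hk hne
    rw [PowerSeries.coeff_one, if_neg hne, zero_mul]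
  · intro h; exact absurd (Finset.mem_range.2 (Nat.succ_pos n)) h

lemma pscomp_add' (f f' g : PowerSeries ℝ) :
    pscomp (f + f') g = pscomp f g + pscomp f' g := by
  ext n
  rw [map_add, pscomp_coeff', pscomp_coeff', pscomp_coeff', ← Finset.sum_add_distrib]
  apply Finset.sum_congr rfl
  intro k _
  rw [map_add]
  ring

lemma pscomp_mul' (f f' g : PowerSeries ℝ) (hg : PowerSeries.constantCoeff g = 0) :
    pscomp (f * f') g = pscomp f g * pscomp f' g := by
  ext n
  rw [pscomp_coeff', PowerSeries.coeff_mul]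
  have lhs_eq : ∑ m ∈ Finset.range (n+1),
      (PowerSeries.coeff m (f * f')) * (PowerSeries.coeff n (g ^ m))
      = ∑ p ∈ Finset.range (n+1) ×ˢ Finset.range (n+1),
          (PowerSeries.coeff p.1 f) * (PowerSeries.coeff p.2 f')
            * (PowerSeries.coeff n (g ^ (p.1 + p.2))) := by
    have step1 : ∀ m ∈ Finset.range (n+1),
        (PowerSeries.coeff m (f * f')) * (PowerSeries.coeff n (g ^ m))
        = ∑ p ∈ Finset.HasAntidiagonal.antidiagonal m,
            (PowerSeries.coeff p.1 f) * (PowerSeries.coeff p.2 f')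
              * (PowerSeries.coeff n (g ^ (p.1 + p.2))) := by
      intro m _
      rw [PowerSeries.coeff_mul, Finset.sum_mul]
      apply Finset.sum_congr rfl
      intro p hp
      rw [Finset.HasAntidiagonal.mem_antidiagonal] at hp
      rw [hp]
    rw [Finset.sum_congr rfl step1]
    rw [Finset.sum_comm' (t' := Finset.range (n+1) ×ˢ Finset.range (n+1))
      (s' := fun p => (Finset.range (n+1)).filter (fun m => m = p.1 + p.2))]
    · apply Finset.sum_congr rfl
      intro p hp
      rw [Finset.mem_product, Finset.mem_range, Finset.mem_range] at hp
      rcases le_or_gt (p.1 + p.2) n with hle | hlt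
      · rw [Finset.filter_eq', if_pos (Finset.mem_range.2 (by omega))]
        rw [Finset.sum_singleton]
      · rw [Finset.filter_eq', if_neg (by rw [Finset.mem_range]; omega)]
        rw [Finset.sum_empty, coeff_pow_zero' g hg _ n hlt, mul_zero]
    · intro m p
      simp only [Finset.mem_range, Finset.HasAntidiagonal.mem_antidiagonal, Finset.mem_product,
        Finset.mem_filter]
      omega
  rw [lhs_eq]
  have rhs_step : ∀ q ∈ Finset.HasAntidiagonal.antidiagonal n,
      (PowerSeries.coeff q.1 (pscomp f g)) * (PowerSeries.coeff q.2 (pscomp f' g))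
      = ∑ p ∈ Finset.range (n+1) ×ˢ Finset.range (n+1),
          ((PowerSeries.coeff p.1 f) * (PowerSeries.coeff q.1 (g ^ p.1)))
          * ((PowerSeries.coeff p.2 f') * (PowerSeries.coeff q.2 (g ^ p.2))) := by
    intro q hq
    rw [Finset.HasAntidiagonal.mem_antidiagonal] at hq
    rw [pscomp_coeff', pscomp_coeff']
    have e1 : ∑ k ∈ Finset.range (q.1 + 1), (PowerSeries.coeff k f) * (PowerSeries.coeff q.1 (g ^ k))
        = ∑ k ∈ Finset.range (n + 1), (PowerSeries.coeff k f) * (PowerSeries.coeff q.1 (g ^ k)) := by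
      apply Finset.sum_subset
      · intro k hk; rw [Finset.mem_range] at *; omega
      · intro k _ hk
        rw [Finset.mem_range] at hk
        rw [coeff_pow_zero' g hg k q.1 (by omega), mul_zero]
    have e2 : ∑ k ∈ Finset.range (q.2 + 1), (PowerSeries.coeff k f') * (PowerSeries.coeff q.2 (g ^ k))
        = ∑ k ∈ Finset.range (n + 1), (PowerSeries.coeff k f') * (PowerSeries.coeff q.2 (g ^ k)) := by
      apply Finset.sum_subset
      · intro k hk; rw [Finset.mem_range] at *; omega
      · intro k _ hk
        rw [Finset.mem_range] at hk
        rw [coeff_pow_zero' g hg k q.2 (by omega), mul_zero]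
    rw [e1, e2, Finset.sum_mul_sum, ← Finset.sum_product']
  rw [Finset.sum_congr rfl rhs_step, Finset.sum_comm]
  apply Finset.sum_congr rfl
  intro p _
  rw [pow_add g p.1 p.2, PowerSeries.coeff_mul, Finset.mul_sum]
  apply Finset.sum_congr rfl
  intro q _
  ring

lemma pscomp_pow' (f g : PowerSeries ℝ) (hg : PowerSeries.constantCoeff g = 0) (k : ℕ) :
    pscomp (f ^ k) g = (pscomp f g) ^ k := by
  induction k with
  | zero => simpa using pscomp_one' g
  | succ k ih => rw [pow_succ, pow_succ, pscomp_mul' _ _ _ hg, ih]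

theorem degenerate_stirling2_via_jindalrae (lam : ℝ) (hlam : lam ≠ 0)
    (S1 S2 : ℕ → ℕ → ℝ) (SJ2 : ℕ → ℕ → ℝ)
    (hS1 : ∀ (n : ℕ) (x : ℝ), dff 1 n x = ∑ l ∈ Finset.range (n + 1), S1 n l * dff lam l x)
    (hS2 : ∀ (n : ℕ) (x : ℝ), dff lam n x = ∑ k ∈ Finset.range (n + 1), S2 n k * dff 1 k x)
    (hSJ2 : ∀ k : ℕ, (PowerSeries.C ((k.factorial : ℝ))⁻¹) * (pscomp (degExp lam 1) (degExp lam 1 - 1) - 1) ^ k = PowerSeries.mk (fun n => if k ≤ n then SJ2 n k / n.factorial else 0))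
    : ∀ n k : ℕ, k ≤ n → S2 n k = ∑ m ∈ Finset.Icc k n, SJ2 m k * S1 n m := by
  set g : PowerSeries ℝ := degExp lam 1 - 1 with hgdef
  have hg : PowerSeries.constantCoeff g = 0 := by
    rw [hgdef, map_sub, map_one, ← PowerSeries.coeff_zero_eq_constantCoeff]
    simp [degExp, PowerSeries.coeff_mk, dff_zero']
  have hE : degExp lam 1 = g + 1 := by rw [hgdef]; ring
  -- Step 1: coefficients of powers of g via S2
  have key1 : ∀ n k : ℕ, PowerSeries.coeff n (g ^ k)
      = if k ≤ n then S2 n k * (k.factorial : ℝ) / (n.factorial : ℝ) else 0 := by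
    intro n
    apply binom_inv' (fun k => PowerSeries.coeff n (g ^ k))
      (fun k => if k ≤ n then S2 n k * (k.factorial : ℝ) / (n.factorial : ℝ) else 0)
    intro j
    have hL : ∑ k ∈ range (j+1), (j.choose k : ℝ) * PowerSeries.coeff n (g ^ k)
        = dff lam n (j:ℝ) / (n.factorial : ℝ) := by
      have hexp : (g + 1) ^ j
          = ∑ k ∈ range (j+1), (PowerSeries.C ((j.choose k : ℕ) : ℝ)) * g ^ k := by
        rw [add_pow]
        apply Finset.sum_congr rfl
        intro k _
        rw [one_pow, mul_one, mul_comm, map_natCast PowerSeries.C]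
      have := congrArg (PowerSeries.coeff n) hexp
      rw [map_sum] at this
      have this2 : PowerSeries.coeff n ((g+1)^j)
          = ∑ k ∈ range (j+1), (j.choose k : ℝ) * PowerSeries.coeff n (g ^ k) := by
        rw [this]
        apply Finset.sum_congr rfl
        intro k _
        rw [PowerSeries.coeff_C_mul]
      rw [← this2, ← hE, degExp_nat_pow']
      simp [degExp, PowerSeries.coeff_mk]
    have hR : ∑ k ∈ range (j+1), (j.choose k : ℝ)
          * (if k ≤ n then S2 n k * (k.factorial : ℝ) / (n.factorial : ℝ) else 0)
        = dff lam n (j:ℝ) / (n.factorial : ℝ) := by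
      have hM1 : ∑ k ∈ range (j+1), (j.choose k : ℝ)
            * (if k ≤ n then S2 n k * (k.factorial : ℝ) / (n.factorial : ℝ) else 0)
          = ∑ k ∈ range (max j n + 1), (j.choose k : ℝ)
            * (if k ≤ n then S2 n k * (k.factorial : ℝ) / (n.factorial : ℝ) else 0) := by
        apply Finset.sum_subset
        · intro k hk; rw [Finset.mem_range] at *; omega
        · intro k _ hk
          rw [Finset.mem_range] at hk
          rw [Nat.choose_eq_zero_of_lt (by omega)]
          push_cast; ring
      have hM2 : ∑ k ∈ range (n+1), (j.choose k : ℝ)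
            * (if k ≤ n then S2 n k * (k.factorial : ℝ) / (n.factorial : ℝ) else 0)
          = ∑ k ∈ range (max j n + 1), (j.choose k : ℝ)
            * (if k ≤ n then S2 n k * (k.factorial : ℝ) / (n.factorial : ℝ) else 0) := by
        apply Finset.sum_subset
        · intro k hk; rw [Finset.mem_range] at *; omega
        · intro k _ hk
          rw [Finset.mem_range] at hk
          rw [if_neg (by omega)]
          ring
      rw [hM1, ← hM2]
      have : ∑ k ∈ range (n+1), (j.choose k : ℝ)
            * (if k ≤ n then S2 n k * (k.factorial : ℝ) / (n.factorial : ℝ) else 0)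
          = (∑ k ∈ range (n+1), S2 n k * dff 1 k (j:ℝ)) / (n.factorial : ℝ) := by
        rw [Finset.sum_div]
        apply Finset.sum_congr rfl
        intro k hk
        rw [Finset.mem_range] at hk
        rw [if_pos (by omega), dff_one_nat']
        ring
      rw [this, ← hS2 n (j:ℝ)]
    rw [hL, hR]
  -- Step 2: Jindalrae numbers as double S2 sums
  have key2 : ∀ n k : ℕ, k ≤ n → SJ2 n k = ∑ m ∈ Finset.Icc k n, S2 n m * S2 m k := by
    intro n k hkn
    have h := congrArg (PowerSeries.coeff n) (hSJ2 k)
    rw [PowerSeries.coeff_mk, if_pos hkn, PowerSeries.coeff_C_mul] at h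
    have hcomp : pscomp (degExp lam 1) g - 1 = pscomp g g := by
      rw [hE, pscomp_add', pscomp_one']
      ring
    rw [hcomp, ← pscomp_pow' g g hg k, pscomp_coeff'] at h
    have hterm : ∀ m ∈ range (n+1),
        (PowerSeries.coeff m (g ^ k)) * (PowerSeries.coeff n (g ^ m))
        = if k ≤ m then S2 n m * S2 m k * ((k.factorial : ℝ) / (n.factorial : ℝ)) else 0 := by
      intro m hm
      rw [Finset.mem_range] at hm
      rw [key1 m k, key1 n m, if_pos (by omega : m ≤ n)]
      by_cases hkm : k ≤ m
      · rw [if_pos hkm, if_pos hkm]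
        have hmf : (m.factorial : ℝ) ≠ 0 := by positivity
        field_simp
      · rw [if_neg hkm, if_neg hkm, zero_mul]
    rw [Finset.sum_congr rfl hterm] at h
    have hIcc : ∑ m ∈ range (n+1),
        (if k ≤ m then S2 n m * S2 m k * ((k.factorial : ℝ) / (n.factorial : ℝ)) else 0)
        = ∑ m ∈ Finset.Icc k n, S2 n m * S2 m k * ((k.factorial : ℝ) / (n.factorial : ℝ)) := by
      rw [← Finset.sum_filter]
      apply Finset.sum_congr
      · ext m
        simp only [Finset.mem_filter, Finset.mem_range, Finset.mem_Icc]
        omega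
      · intro m _; rfl
    rw [hIcc, ← Finset.sum_mul] at h
    have hkf : (k.factorial : ℝ) ≠ 0 := by positivity
    have hnf : (n.factorial : ℝ) ≠ 0 := by positivity
    field_simp at h
    linarith
  -- Step 3: orthogonality of S1 and S2
  intro n k hkn
  have orth : ∀ l, l ≤ n →
      (∑ m ∈ Finset.Icc l n, S1 n m * S2 m l) = if l = n then 1 else 0 := by
    have hker : ∀ x : ℝ, ∑ l ∈ range (n+1),
        ((∑ m ∈ Finset.Icc l n, S1 n m * S2 m l) - (if l = n then 1 else 0)) * dff 1 l x = 0 := by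
      intro x
      have hsplit : ∑ l ∈ range (n+1),
          ((∑ m ∈ Finset.Icc l n, S1 n m * S2 m l) - (if l = n then 1 else 0)) * dff 1 l x
          = (∑ l ∈ range (n+1), ∑ m ∈ Finset.Icc l n, S1 n m * S2 m l * dff 1 l x)
            - ∑ l ∈ range (n+1), (if l = n then 1 else 0) * dff 1 l x := by
        rw [← Finset.sum_sub_distrib]
        apply Finset.sum_congr rfl
        intro l _
        rw [sub_mul, Finset.sum_mul]
      rw [hsplit]
      have h2 : ∑ l ∈ range (n+1), (if l = n then (1:ℝ) else 0) * dff 1 l x = dff 1 n x := by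
        rw [Finset.sum_eq_single n]
        · rw [if_pos rfl, one_mul]
        · intro l _ hne; rw [if_neg hne, zero_mul]
        · intro h'; exact absurd (Finset.mem_range.2 (by omega)) h'
      have h1 : ∑ l ∈ range (n+1), ∑ m ∈ Finset.Icc l n, S1 n m * S2 m l * dff 1 l x
          = dff 1 n x := by
        rw [Finset.sum_comm' (t' := range (n+1)) (s' := fun m => range (m+1))
          (f := fun l m => S1 n m * S2 m l * dff 1 l x)]
        · have : ∀ m ∈ range (n+1), ∑ l ∈ range (m+1), S1 n m * S2 m l * dff 1 l x
              = S1 n m * dff lam m x := by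
            intro m _
            rw [hS2 m x, Finset.mul_sum]
            apply Finset.sum_congr rfl
            intro l _
            ring
          rw [Finset.sum_congr rfl this, ← hS1 n x]
        · intro l m
          simp only [Finset.mem_range, Finset.mem_Icc]
          omega
      rw [h1, h2, sub_self]
    intro l hl
    have := lindep' (n+1) _ hker l (by omega)
    linarith [this]
  -- Step 4: assemble
  have step1 : ∑ m ∈ Finset.Icc k n, SJ2 m k * S1 n m
      = ∑ m ∈ Finset.Icc k n, ∑ l ∈ Finset.Icc k m, S2 m l * S2 l k * S1 n m := by
    apply Finset.sum_congr rfl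
    intro m hm
    rw [Finset.mem_Icc] at hm
    rw [key2 m k hm.1, Finset.sum_mul]
  have step2 : ∑ m ∈ Finset.Icc k n, ∑ l ∈ Finset.Icc k m, S2 m l * S2 l k * S1 n m
      = ∑ l ∈ Finset.Icc k n, ∑ m ∈ Finset.Icc l n, S2 m l * S2 l k * S1 n m := by
    apply Finset.sum_comm'
    intro m l
    simp only [Finset.mem_Icc]
    omega
  have step3 : ∑ l ∈ Finset.Icc k n, ∑ m ∈ Finset.Icc l n, S2 m l * S2 l k * S1 n m
      = ∑ l ∈ Finset.Icc k n, S2 l k * (if l = n then 1 else 0) := by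
    apply Finset.sum_congr rfl
    intro l hl
    rw [Finset.mem_Icc] at hl
    rw [← orth l hl.2, Finset.mul_sum]
    apply Finset.sum_congr rfl
    intro m _
    ring
  have step4 : ∑ l ∈ Finset.Icc k n, S2 l k * (if l = n then (1:ℝ) else 0) = S2 n k := by
    rw [Finset.sum_eq_single n]
    · rw [if_pos rfl, mul_one]
    · intro l _ hne; rw [if_neg hne, mul_zero]
    · intro h'; exact absurd (Finset.mem_Icc.2 ⟨hkn, le_refl n⟩) h'
  rw [step1, step2, step3, step4]
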